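/- Let λ⁽¹⁾, …, λ⁽ᵏ⁾ be partitions with at most n parts, let s = s_{λ⁽¹⁾} + ⋯ + s_{λ⁽ᵏ⁾} in ℤ[x₁,…,x_n], and for t ∈ ℤ_{>0} define ts = Σ_{I} s_{λ_I} summed over all size-t multisubsets I of {1,…,k}, where λ_I = Σ_{i∈I} λ⁽ⁱ⁾. If for every t the support of ts equals the set of lattice points of t·Newt(s), then Newt(s) has the integer decomposition property. -/

import Mathlib

open Pointwise

/-- The content of a semistandard Young tableau: `content T v` is the number of cells whose
entry equals `v`. -/
def content {μ : YoungDiagram} (T : SemistandardYoungTableau μ) (v : ℕ) : ℕ :=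
  (μ.cells.filter fun c => T c.1 c.2 = v).card

/-- The set of content vectors of semistandard Young tableaux of shape `D` with entries in
`{0, …, n-1}`; this is the support of the Schur polynomial `s_D` in `n` variables. -/
def ssytContents (D : YoungDiagram) (n : ℕ) : Set (Fin n → ℕ) :=
  {α | ∃ T : SemistandardYoungTableau D,
    (∀ c ∈ D.cells, T c.1 c.2 < n) ∧ ∀ i : Fin n, content T (i : ℕ) = α i}

/-- Cast a vector of naturals to a real vector. -/
def castN {n : ℕ} (α : Fin n → ℕ) : Fin n → ℝ := fun i => (α i : ℝ)

/-- Cast a vector of integers to a real vector. -/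
def castZ {n : ℕ} (y : Fin n → ℤ) : Fin n → ℝ := fun i => (y i : ℝ)

/-- The support of `ts = Σ_I s_{λ_I}`, summed over all size-`t` multisubsets `I` of
`{1,…,k}`, where `λ_I = Σ_{i ∈ I} λ⁽ⁱ⁾` (as a sum of row lengths). -/
def suppTS {k : ℕ} (lam : Fin k → YoungDiagram) (n t : ℕ) : Set (Fin n → ℕ) :=
  {α | ∃ I : Multiset (Fin k), Multiset.card I = t ∧
    ∃ D : YoungDiagram, (∀ r : ℕ, D.rowLen r = (I.map fun i => (lam i).rowLen r).sum) ∧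
      α ∈ ssytContents D n}

namespace SNPaux

open YoungDiagram Finset

lemma nat_le_of_lt_imp_lt {a b : ℕ} (h : ∀ j, j < a → j < b) : a ≤ b := by
  cases a with
  | zero => exact Nat.zero_le _
  | succ m => exact h m (Nat.lt_succ_self m)

lemma nat_eq_of_lt_iff {a b : ℕ} (h : ∀ j, j < a ↔ j < b) : a = b :=
  le_antisymm (nat_le_of_lt_imp_lt fun j hj => (h j).mp hj)
    (nat_le_of_lt_imp_lt fun j hj => (h j).mpr hj)

lemma rowLen_eq_zero_of_le {μ : YoungDiagram} {r : ℕ} (h : μ.colLen 0 ≤ r) :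
    μ.rowLen r = 0 := by
  by_contra h'
  have hm : (r, 0) ∈ μ := mem_iff_lt_rowLen.2 (Nat.pos_of_ne_zero h')
  exact absurd (mem_iff_lt_colLen.1 hm) (not_lt.mpr h)

/-- Build a Young diagram from a row-length function. -/
def ofFn (g : ℕ → ℕ) (hg : ∀ r, g (r + 1) ≤ g r) (N : ℕ) (hN : ∀ r, N ≤ r → g r = 0) :
    YoungDiagram where
  cells := (Finset.range N ×ˢ Finset.range (g 0)).filter fun c => c.2 < g c.1
  isLowerSet := by
    intro x y hxy hx
    simp only [Finset.coe_filter, Set.mem_setOf_eq, Finset.mem_product, Finset.mem_range] at hx ⊢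
    obtain ⟨⟨h1, h2⟩, h3⟩ := hx
    have hy1 : y.1 ≤ x.1 := hxy.1
    have hy2 : y.2 ≤ x.2 := hxy.2
    have hga : g x.1 ≤ g y.1 := antitone_nat_of_succ_le hg hy1
    exact ⟨⟨lt_of_le_of_lt hy1 h1, lt_of_le_of_lt hy2 h2⟩, lt_of_le_of_lt hy2 (lt_of_lt_of_le h3 hga)⟩

lemma mem_ofFn (g : ℕ → ℕ) (hg : ∀ r, g (r + 1) ≤ g r) (N : ℕ) (hN : ∀ r, N ≤ r → g r = 0)
    {i j : ℕ} : (i, j) ∈ ofFn g hg N hN ↔ j < g i := by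
  rw [← YoungDiagram.mem_cells]
  simp only [ofFn, Finset.mem_filter, Finset.mem_product, Finset.mem_range]
  constructor
  · rintro ⟨-, h⟩; exact h
  · intro h
    have hiN : i < N := by
      by_contra hc
      rw [hN i (not_lt.mp hc)] at h
      exact Nat.not_lt_zero _ h
    exact ⟨⟨hiN, lt_of_lt_of_le h (antitone_nat_of_succ_le hg (Nat.zero_le i))⟩, h⟩

lemma rowLen_ofFn (g : ℕ → ℕ) (hg : ∀ r, g (r + 1) ≤ g r) (N : ℕ)
    (hN : ∀ r, N ≤ r → g r = 0) (i : ℕ) : (ofFn g hg N hN).rowLen i = g i :=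
  nat_eq_of_lt_iff fun j => by rw [← mem_iff_lt_rowLen, mem_ofFn]

lemma card_eq_sum_rowLen (μ : YoungDiagram) (N : ℕ) (h : ∀ r, N ≤ r → μ.rowLen r = 0) :
    μ.cells.card = ∑ r ∈ Finset.range N, μ.rowLen r := by
  rw [Finset.card_eq_sum_card_fiberwise (f := Prod.fst) (t := Finset.range N) ?_]
  · refine Finset.sum_congr rfl fun r _ => ?_
    rw [μ.rowLen_eq_card]
    rfl
  · intro c hc
    rw [Finset.mem_coe, Finset.mem_range]
    by_contra hc'
    have h0 : μ.rowLen c.1 = 0 := h c.1 (not_lt.mp hc')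
    have : (c.1, c.2) ∈ μ := by rw [Finset.mem_coe, YoungDiagram.mem_cells] at hc; exact hc
    rw [mem_iff_lt_rowLen, h0] at this
    exact Nat.not_lt_zero _ this

section Truncate

variable {μ : YoungDiagram} (T : SemistandardYoungTableau μ) (v : ℕ)

/-- The subdiagram of cells with entry `< v`. -/
def truncate : YoungDiagram where
  cells := μ.cells.filter fun c => T c.1 c.2 < v
  isLowerSet := by
    intro x y hxy hx
    simp only [Finset.coe_filter, Set.mem_setOf_eq, YoungDiagram.mem_cells] at hx ⊢
    obtain ⟨hcell, hlt⟩ := hx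
    have hy1 : y.1 ≤ x.1 := hxy.1
    have hy2 : y.2 ≤ x.2 := hxy.2
    have h1 : (y.1, y.2) ∈ μ := μ.up_left_mem hy1 hy2 (by simpa using hcell)
    have h2 : (y.1, x.2) ∈ μ := μ.up_left_mem hy1 le_rfl (by simpa using hcell)
    have hle : T y.1 y.2 ≤ T x.1 x.2 :=
      (T.row_weak_of_le hy2 h2).trans (T.col_weak hy1 (by simpa using hcell))
    exact ⟨by simpa using h1, lt_of_le_of_lt hle hlt⟩

lemma mem_truncate {i j : ℕ} : (i, j) ∈ truncate T v ↔ (i, j) ∈ μ ∧ T i j < v := by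
  rw [← YoungDiagram.mem_cells]
  simp [truncate, YoungDiagram.mem_cells]

lemma truncate_rowLen_le (r : ℕ) : (truncate T v).rowLen r ≤ μ.rowLen r := by
  refine nat_le_of_lt_imp_lt fun j hj => ?_
  rw [← mem_iff_lt_rowLen] at hj ⊢
  exact ((mem_truncate T v).1 hj).1

lemma rowLen_succ_le_truncate (hTv : ∀ c ∈ μ.cells, T c.1 c.2 < v + 1) (r : ℕ) :
    μ.rowLen (r + 1) ≤ (truncate T v).rowLen r := by
  refine nat_le_of_lt_imp_lt fun j hj => ?_
  rw [← mem_iff_lt_rowLen] at hj ⊢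
  have h1 : (r, j) ∈ μ := μ.up_left_mem (Nat.le_succ r) le_rfl hj
  have h2 : T r j < T (r + 1) j := T.col_strict (Nat.lt_succ_self r) hj
  have h3 : T (r + 1) j < v + 1 := hTv _ (YoungDiagram.mem_cells _ |>.2 hj)
  exact (mem_truncate T v).2 ⟨h1, by omega⟩

/-- The restriction of `T` to `truncate T v`. -/
def restrictT : SemistandardYoungTableau (truncate T v) where
  entry i j := if (i, j) ∈ (truncate T v).cells then T i j else 0
  row_weak' := by
    intro i j1 j2 hj hcell
    have hcell' : (i, j2) ∈ (truncate T v).cells := YoungDiagram.mem_cells _ |>.2 hcell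
    have h1 : (i, j1) ∈ truncate T v := (truncate T v).up_left_mem le_rfl hj.le hcell
    rw [if_pos hcell', if_pos (YoungDiagram.mem_cells _ |>.2 h1)]
    exact T.row_weak hj ((mem_truncate T v).1 hcell).1
  col_strict' := by
    intro i1 i2 j hi hcell
    have hcell' : (i2, j) ∈ (truncate T v).cells := YoungDiagram.mem_cells _ |>.2 hcell
    have h1 : (i1, j) ∈ truncate T v := (truncate T v).up_left_mem hi.le le_rfl hcell
    rw [if_pos hcell', if_pos (YoungDiagram.mem_cells _ |>.2 h1)]
    exact T.col_strict hi ((mem_truncate T v).1 hcell).1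
  zeros' := by
    intro i j h
    exact if_neg fun hc => h (YoungDiagram.mem_cells _ |>.1 hc)

@[simp] lemma restrictT_apply (i j : ℕ) :
    restrictT T v i j = if (i, j) ∈ (truncate T v).cells then T i j else 0 := rfl

lemma restrictT_lt (c : ℕ × ℕ) (hc : c ∈ (truncate T v).cells) : restrictT T v c.1 c.2 < v := by
  rw [restrictT_apply, if_pos (by simpa using hc)]
  have := YoungDiagram.mem_cells _ |>.1 hc
  exact ((mem_truncate T v).1 (by simpa using this)).2

lemma content_restrictT (w : ℕ) (hw : w < v) :
    content (restrictT T v) w = content T w := by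
  unfold content
  congr 1
  ext c
  simp only [Finset.mem_filter]
  constructor
  · rintro ⟨hc, he⟩
    rw [restrictT_apply, if_pos (by simpa using hc)] at he
    have hcm : (c.1, c.2) ∈ truncate T v := by
      rw [YoungDiagram.mem_cells] at hc; simpa using hc
    exact ⟨YoungDiagram.mem_cells _ |>.2 ((mem_truncate T v).1 hcm).1, he⟩
  · rintro ⟨hc, he⟩
    have hcm : (c.1, c.2) ∈ truncate T v :=
      (mem_truncate T v).2 ⟨YoungDiagram.mem_cells _ |>.1 hc, by omega⟩
    have hcm' : c ∈ (truncate T v).cells := YoungDiagram.mem_cells _ |>.2 (by simpa using hcm)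
    refine ⟨hcm', ?_⟩
    rw [restrictT_apply, if_pos (by simpa using hcm')]
    exact he

lemma content_top (hTv : ∀ c ∈ μ.cells, T c.1 c.2 < v + 1) :
    content T v + (truncate T v).cells.card = μ.cells.card := by
  unfold content
  have hfe : (truncate T v).cells = μ.cells.filter fun c => ¬ T c.1 c.2 = v := by
    show μ.cells.filter _ = _
    refine Finset.filter_congr fun c hc => ?_
    have := hTv c hc
    constructor <;> intro h <;> omega
  rw [hfe]
  exact Finset.card_filter_add_card_filter_not _

end Truncate

section Extend

lemma cells_subset_of_rowLen_le (D' D : YoungDiagram)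
    (hsub : ∀ r, D'.rowLen r ≤ D.rowLen r) : D'.cells ⊆ D.cells := by
  intro c hc
  rw [YoungDiagram.mem_cells] at hc ⊢
  have : (c.1, c.2) ∈ D' := by simpa using hc
  rw [mem_iff_lt_rowLen] at this
  have : c.2 < D.rowLen c.1 := lt_of_lt_of_le this (hsub c.1)
  simpa using mem_iff_lt_rowLen.2 this

/-- Extend a tableau on `D'` to `D` by filling the horizontal strip `D \ D'` with value `v`. -/
def extendT (D' D : YoungDiagram) (hsub : ∀ r, D'.rowLen r ≤ D.rowLen r)
    (hstrip : ∀ r, D.rowLen (r + 1) ≤ D'.rowLen r)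
    (T' : SemistandardYoungTableau D') (v : ℕ)
    (hT' : ∀ c ∈ D'.cells, T' c.1 c.2 < v) : SemistandardYoungTableau D where
  entry i j := if (i, j) ∈ D'.cells then T' i j else if (i, j) ∈ D.cells then v else 0
  row_weak' := by
    intro i j1 j2 hj hcell
    have hd1 : (i, j1) ∈ D := D.up_left_mem le_rfl hj.le hcell
    by_cases h2 : (i, j2) ∈ D'.cells
    · have h1 : (i, j1) ∈ D' := D'.up_left_mem le_rfl hj.le (YoungDiagram.mem_cells _ |>.1 h2)
      rw [if_pos h2, if_pos (YoungDiagram.mem_cells _ |>.2 h1)]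
      exact T'.row_weak hj (YoungDiagram.mem_cells _ |>.1 h2)
    · rw [if_neg h2, if_pos (YoungDiagram.mem_cells _ |>.2 hcell)]
      by_cases h1 : (i, j1) ∈ D'.cells
      · rw [if_pos h1]
        exact le_of_lt (hT' (i, j1) h1)
      · rw [if_neg h1, if_pos (YoungDiagram.mem_cells _ |>.2 hd1)]
  col_strict' := by
    intro i1 i2 j hi hcell
    by_cases h2 : (i2, j) ∈ D'.cells
    · have h1 : (i1, j) ∈ D' := D'.up_left_mem hi.le le_rfl (YoungDiagram.mem_cells _ |>.1 h2)
      rw [if_pos h2, if_pos (YoungDiagram.mem_cells _ |>.2 h1)]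
      exact T'.col_strict hi (YoungDiagram.mem_cells _ |>.1 h2)
    · rw [if_neg h2, if_pos (YoungDiagram.mem_cells _ |>.2 hcell)]
      have hj : j < D.rowLen i2 := mem_iff_lt_rowLen.1 hcell
      have hj2 : j < D'.rowLen i1 := by
        have h3 : D.rowLen i2 ≤ D.rowLen (i1 + 1) := D.rowLen_anti _ _ hi
        have := hstrip i1
        omega
      have h1 : (i1, j) ∈ D'.cells := YoungDiagram.mem_cells _ |>.2 (mem_iff_lt_rowLen.2 hj2)
      rw [if_pos h1]
      exact hT' (i1, j) h1
  zeros' := by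
    intro i j h
    have h' : (i, j) ∉ D'.cells := fun hc =>
      h (YoungDiagram.mem_cells _ |>.1 (cells_subset_of_rowLen_le D' D hsub hc))
    rw [if_neg h', if_neg fun hc => h (YoungDiagram.mem_cells _ |>.1 hc)]

@[simp] lemma extendT_apply (D' D : YoungDiagram) (hsub : ∀ r, D'.rowLen r ≤ D.rowLen r)
    (hstrip : ∀ r, D.rowLen (r + 1) ≤ D'.rowLen r)
    (T' : SemistandardYoungTableau D') (v : ℕ)
    (hT' : ∀ c ∈ D'.cells, T' c.1 c.2 < v) (i j : ℕ) :
    extendT D' D hsub hstrip T' v hT' i j =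
      if (i, j) ∈ D'.cells then T' i j else if (i, j) ∈ D.cells then v else 0 := rfl

lemma ssytContents_extend (D' D : YoungDiagram) {n : ℕ} (β' : Fin n → ℕ)
    (hsub' : ∀ r, D'.rowLen r ≤ D.rowLen r) (hstrip' : ∀ r, D.rowLen (r + 1) ≤ D'.rowLen r)
    (hβ' : β' ∈ ssytContents D' n) :
    (Fin.snoc β' (D.cells.card - D'.cells.card) : Fin (n + 1) → ℕ) ∈ ssytContents D (n + 1) := by
  obtain ⟨T', hT'lt, hT'c⟩ := hβ'
  set E := extendT D' D hsub' hstrip' T' n hT'lt with hE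
  have hsubc : D'.cells ⊆ D.cells := cells_subset_of_rowLen_le D' D hsub'
  refine ⟨E, ?_, ?_⟩
  · intro c hc
    rw [hE, extendT_apply]
    by_cases h1 : (c.1, c.2) ∈ D'.cells
    · rw [if_pos h1]
      exact lt_trans (hT'lt _ (by simpa using h1)) (Nat.lt_succ_self n)
    · rw [if_neg h1, if_pos (by simpa using hc)]
      exact Nat.lt_succ_self n
  · intro i
    refine Fin.lastCases ?_ ?_ i
    · rw [Fin.snoc_last]
      unfold content
      have hset : (D.cells.filter fun c => E c.1 c.2 = (Fin.last n : Fin (n + 1))) =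
          D.cells \ D'.cells := by
        ext c
        simp only [Finset.mem_filter, Finset.mem_sdiff, Fin.val_last]
        constructor
        · rintro ⟨hc, he⟩
          refine ⟨hc, fun h1 => ?_⟩
          rw [hE, extendT_apply, if_pos (by simpa using h1)] at he
          exact absurd he (Nat.ne_of_lt (hT'lt _ (by simpa using h1)))
        · rintro ⟨hc, h1⟩
          refine ⟨hc, ?_⟩
          rw [hE, extendT_apply, if_neg (by simpa using h1), if_pos (by simpa using hc)]
      rw [hset, Finset.card_sdiff_of_subset hsubc]
    · intro i
      rw [Fin.snoc_castSucc]
      rw [← hT'c i]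
      unfold content
      congr 1
      ext c
      simp only [Finset.mem_filter, Fin.coe_castSucc]
      constructor
      · rintro ⟨hc, he⟩
        by_cases h1 : (c.1, c.2) ∈ D'.cells
        · rw [hE, extendT_apply, if_pos (by simpa using h1)] at he
          exact ⟨by simpa using h1, he⟩
        · rw [hE, extendT_apply, if_neg (by simpa using h1), if_pos (by simpa using hc)] at he
          exact absurd he.symm (Nat.ne_of_lt i.isLt)
      · rintro ⟨hc, he⟩
        refine ⟨hsubc hc, ?_⟩
        rw [hE, extendT_apply, if_pos (by simpa using hc)]
        exact he

end Extend

/-- The zero tableau on an empty diagram. -/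
def zeroT (D : YoungDiagram) (hD : ∀ r, D.rowLen r = 0) : SemistandardYoungTableau D where
  entry _ _ := 0
  row_weak' := fun _ _ => le_rfl
  col_strict' := by
    intro i1 i2 j _ hc
    rw [mem_iff_lt_rowLen, hD] at hc
    exact absurd hc (Nat.not_lt_zero _)
  zeros' := fun _ => rfl

lemma ssytContents_zero {n : ℕ} (D : YoungDiagram) (hD : ∀ r, D.rowLen r = 0)
    (α : Fin n → ℕ) (hα : ∀ i, α i = 0) : α ∈ ssytContents D n := by
  have hcells : D.cells = ∅ := by
    ext c
    simp only [Finset.notMem_empty, iff_false]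
    intro hc
    have : (c.1, c.2) ∈ D := by rw [YoungDiagram.mem_cells] at hc; simpa using hc
    rw [mem_iff_lt_rowLen, hD] at this
    exact Nat.not_lt_zero _ this
  refine ⟨zeroT D hD, ?_, ?_⟩
  · intro c hc; rw [hcells] at hc; exact absurd hc (Finset.notMem_empty c)
  · intro i
    unfold content
    rw [hcells]
    simp [hα i]

/-- The key splitting lemma: if the rows of `D` are the sums of the rows of `D1` and `D2`,
then any ssyt content of `D` splits as a sum of contents of `D1` and `D2`. -/
lemma main_split : ∀ (n : ℕ) (D D1 D2 : YoungDiagram),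
    (∀ r, D.rowLen r = D1.rowLen r + D2.rowLen r) →
    ∀ α : Fin n → ℕ, α ∈ ssytContents D n →
    ∃ β γ : Fin n → ℕ, β ∈ ssytContents D1 n ∧ γ ∈ ssytContents D2 n ∧
      ∀ i, α i = β i + γ i := by
  intro n
  induction n with
  | zero =>
    intro D D1 D2 hsum α hα
    obtain ⟨T, hTlt, -⟩ := hα
    have hD : ∀ r, D.rowLen r = 0 := by
      intro r
      by_contra h
      have hm : (r, 0) ∈ D := mem_iff_lt_rowLen.2 (Nat.pos_of_ne_zero h)
      exact absurd (hTlt (r, 0) (YoungDiagram.mem_cells _ |>.2 hm)) (Nat.not_lt_zero _)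
    have hD1 : ∀ r, D1.rowLen r = 0 := fun r => by have := hsum r; have := hD r; omega
    have hD2 : ∀ r, D2.rowLen r = 0 := fun r => by have := hsum r; have := hD r; omega
    exact ⟨α, α, ssytContents_zero D1 hD1 α (fun i => i.elim0),
      ssytContents_zero D2 hD2 α (fun i => i.elim0), fun i => i.elim0⟩
  | succ n IH =>
    intro D D1 D2 hsum α hα
    obtain ⟨T, hTlt, hTc⟩ := hα
    set Db := truncate T n with hDb
    have hTn : ∀ c ∈ D.cells, T c.1 c.2 < n + 1 := hTlt
    have hsubDb : ∀ r, Db.rowLen r ≤ D.rowLen r := truncate_rowLen_le T n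
    have hstripDb : ∀ r, D.rowLen (r + 1) ≤ Db.rowLen r := rowLen_succ_le_truncate T n hTn
    set N := D.colLen 0 with hN
    have hDzero : ∀ r, N ≤ r → D.rowLen r = 0 := fun r hr => rowLen_eq_zero_of_le hr
    -- greedy split of Db
    set g1 : ℕ → ℕ := fun r => max (D1.rowLen (r + 1)) (Db.rowLen r - D2.rowLen r) with hg1
    set g2 : ℕ → ℕ := fun r => Db.rowLen r - g1 r with hg2
    have hg1leD1 : ∀ r, g1 r ≤ D1.rowLen r := by
      intro r
      refine max_le (D1.rowLen_anti r (r + 1) (Nat.le_succ r)) ?_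
      have := hsubDb r; have := hsum r; omega
    have hg1leDb : ∀ r, g1 r ≤ Db.rowLen r := by
      intro r
      refine max_le (le_trans ?_ (hstripDb r)) (Nat.sub_le _ _)
      have := hsum (r + 1); omega
    have hg1anti : ∀ r, g1 (r + 1) ≤ g1 r := by
      intro r
      refine max_le (le_trans (D1.rowLen_anti (r + 1) (r + 2) (Nat.le_succ _)) (le_max_left _ _)) ?_
      have h1 : Db.rowLen (r + 1) ≤ D.rowLen (r + 1) := hsubDb (r + 1)
      have h2 : D.rowLen (r + 1) = D1.rowLen (r + 1) + D2.rowLen (r + 1) := hsum (r + 1)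
      have h3 : D2.rowLen (r + 2) ≤ D2.rowLen (r + 1) := D2.rowLen_anti _ _ (Nat.le_succ _)
      have h4 : D1.rowLen (r + 1) ≤ g1 r := le_max_left _ _
      omega
    have hg2leD2 : ∀ r, g2 r ≤ D2.rowLen r := by
      intro r
      have h1 : Db.rowLen r - D2.rowLen r ≤ g1 r := le_max_right _ _
      simp only [hg2]
      omega
    have hstrip2 : ∀ r, D2.rowLen (r + 1) ≤ g2 r := by
      intro r
      rcases le_or_gt (Db.rowLen r - D2.rowLen r) (D1.rowLen (r + 1)) with h | h
      · have hg1eq : g1 r = D1.rowLen (r + 1) := max_eq_left h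
        have h1 : D.rowLen (r + 1) ≤ Db.rowLen r := hstripDb r
        have h2 : D.rowLen (r + 1) = D1.rowLen (r + 1) + D2.rowLen (r + 1) := hsum (r + 1)
        simp only [hg2, hg1eq]
        omega
      · have hg1eq : g1 r = Db.rowLen r - D2.rowLen r := max_eq_right h.le
        have h1 : D2.rowLen (r + 1) ≤ D2.rowLen r := D2.rowLen_anti _ _ (Nat.le_succ _)
        have h2 : D2.rowLen (r + 1) ≤ D.rowLen (r + 1) := by have := hsum (r + 1); omega
        have h3 : D.rowLen (r + 1) ≤ Db.rowLen r := hstripDb r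
        simp only [hg2, hg1eq]
        omega
    have hg2anti : ∀ r, g2 (r + 1) ≤ g2 r := fun r => le_trans (hg2leD2 (r + 1)) (hstrip2 r)
    have hg1zero : ∀ r, N ≤ r → g1 r = 0 := by
      intro r hr
      have h1 : g1 r ≤ D1.rowLen r := hg1leD1 r
      have h2 : D.rowLen r = 0 := hDzero r hr
      have := hsum r; omega
    have hg2zero : ∀ r, N ≤ r → g2 r = 0 := by
      intro r hr
      have h1 : g2 r ≤ D2.rowLen r := hg2leD2 r
      have h2 : D.rowLen r = 0 := hDzero r hr
      have := hsum r; omega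
    set Db1 := ofFn g1 hg1anti N hg1zero with hDb1
    set Db2 := ofFn g2 hg2anti N hg2zero with hDb2
    have hDb1row : ∀ r, Db1.rowLen r = g1 r := rowLen_ofFn g1 hg1anti N hg1zero
    have hDb2row : ∀ r, Db2.rowLen r = g2 r := rowLen_ofFn g2 hg2anti N hg2zero
    have hDbsum : ∀ r, Db.rowLen r = Db1.rowLen r + Db2.rowLen r := by
      intro r
      rw [hDb1row, hDb2row]
      have := hg1leDb r
      simp only [hg2]
      omega
    -- recursive call
    set abar : Fin n → ℕ := fun i => content (restrictT T n) i with habar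
    have habarmem : abar ∈ ssytContents Db n :=
      ⟨restrictT T n, fun c hc => restrictT_lt T n c hc, fun i => rfl⟩
    obtain ⟨bb, gg, hbb, hgg, hsplit⟩ := IH Db Db1 Db2 hDbsum abar habarmem
    -- extend
    have hsub1 : ∀ r, Db1.rowLen r ≤ D1.rowLen r := fun r => by
      rw [hDb1row]; exact hg1leD1 r
    have hstrip1 : ∀ r, D1.rowLen (r + 1) ≤ Db1.rowLen r := fun r => by
      rw [hDb1row]; exact le_max_left _ _
    have hsub2 : ∀ r, Db2.rowLen r ≤ D2.rowLen r := fun r => by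
      rw [hDb2row]; exact hg2leD2 r
    have hstrip2' : ∀ r, D2.rowLen (r + 1) ≤ Db2.rowLen r := fun r => by
      rw [hDb2row]; exact hstrip2 r
    refine ⟨Fin.snoc bb (D1.cells.card - Db1.cells.card),
      Fin.snoc gg (D2.cells.card - Db2.cells.card),
      ssytContents_extend Db1 D1 bb hsub1 hstrip1 hbb,
      ssytContents_extend Db2 D2 gg hsub2 hstrip2' hgg, ?_⟩
    intro i
    refine Fin.lastCases ?_ ?_ i
    · rw [Fin.snoc_last, Fin.snoc_last]
      -- card identities
      have hD1zero : ∀ r, N ≤ r → D1.rowLen r = 0 := by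
        intro r hr; have := hsum r; have := hDzero r hr; omega
      have hD2zero : ∀ r, N ≤ r → D2.rowLen r = 0 := by
        intro r hr; have := hsum r; have := hDzero r hr; omega
      have hDbzero : ∀ r, N ≤ r → Db.rowLen r = 0 := by
        intro r hr; have := hsubDb r; have := hDzero r hr; omega
      have hDb1zero : ∀ r, N ≤ r → Db1.rowLen r = 0 := fun r hr => by
        rw [hDb1row]; exact hg1zero r hr
      have hDb2zero : ∀ r, N ≤ r → Db2.rowLen r = 0 := fun r hr => by
        rw [hDb2row]; exact hg2zero r hr
      have hcD : D.cells.card = D1.cells.card + D2.cells.card := by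
        rw [card_eq_sum_rowLen D N hDzero, card_eq_sum_rowLen D1 N hD1zero,
          card_eq_sum_rowLen D2 N hD2zero, ← Finset.sum_add_distrib]
        exact Finset.sum_congr rfl fun r _ => hsum r
      have hcDb : Db.cells.card = Db1.cells.card + Db2.cells.card := by
        rw [card_eq_sum_rowLen Db N hDbzero, card_eq_sum_rowLen Db1 N hDb1zero,
          card_eq_sum_rowLen Db2 N hDb2zero, ← Finset.sum_add_distrib]
        exact Finset.sum_congr rfl fun r _ => hDbsum r
      have hle1 : Db1.cells.card ≤ D1.cells.card := by
        rw [card_eq_sum_rowLen Db1 N hDb1zero, card_eq_sum_rowLen D1 N hD1zero]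
        exact Finset.sum_le_sum fun r _ => hsub1 r
      have hle2 : Db2.cells.card ≤ D2.cells.card := by
        rw [card_eq_sum_rowLen Db2 N hDb2zero, card_eq_sum_rowLen D2 N hD2zero]
        exact Finset.sum_le_sum fun r _ => hsub2 r
      have htop : content T n + Db.cells.card = D.cells.card := content_top T n hTn
      have hαn : content T ((Fin.last n : Fin (n + 1)) : ℕ) = α (Fin.last n) := hTc (Fin.last n)
      rw [Fin.val_last] at hαn
      omega
    · intro i
      rw [Fin.snoc_castSucc, Fin.snoc_castSucc]
      have h1 : content T ((Fin.castSucc i : Fin (n + 1)) : ℕ) = α (Fin.castSucc i) :=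
        hTc (Fin.castSucc i)
      rw [Fin.coe_castSucc] at h1
      have h2 : content (restrictT T n) i = content T i :=
        content_restrictT T n i i.isLt
    -- abar i = content (restrictT T n) i
      have h3 : abar i = bb i + gg i := hsplit i
      rw [habar] at h3
      simp only at h3
      omega

end SNPaux

/-- Let `λ⁽¹⁾, …, λ⁽ᵏ⁾` be partitions with at most `n` parts and
`s = s_{λ⁽¹⁾} + ⋯ + s_{λ⁽ᵏ⁾}`, and for `t > 0` let `ts = Σ_I s_{λ_I}` over size-`t`
multisubsets `I`.  If for every `t > 0` the support of `ts` equals the set of lattice points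
of `t · Newt(s)`, then `Newt(s)` has the integer decomposition property. -/
theorem stmt_13 (n k : ℕ) (lam : Fin k → YoungDiagram)
    (hparts : ∀ i, (lam i).colLen 0 ≤ n)
    (hsnp : ∀ t : ℕ, 0 < t → ∀ y : Fin n → ℤ,
      castZ y ∈ (t : ℝ) • convexHull ℝ (castN '' ⋃ i, ssytContents (lam i) n) ↔
        ∃ α ∈ suppTS lam n t, y = fun i => (α i : ℤ)) :
    ∀ t : ℕ, ∀ y : Fin n → ℤ,
      castZ y ∈ (t : ℝ) • convexHull ℝ (castN '' ⋃ i, ssytContents (lam i) n) →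
      ∃ f : Fin t → (Fin n → ℤ),
        (∀ j, castZ (f j) ∈ convexHull ℝ (castN '' ⋃ i, ssytContents (lam i) n)) ∧
        y = ∑ j, f j := by
  classical
  set P : Set (Fin n → ℝ) := convexHull ℝ (castN '' ⋃ i, ssytContents (lam i) n) with hP
  have hrowlam : ∀ (i : Fin k) r, n ≤ r → (lam i).rowLen r = 0 := fun i r hr =>
    SNPaux.rowLen_eq_zero_of_le (le_trans (hparts i) hr)
  have hmemP : ∀ (i0 : Fin k) (β : Fin n → ℕ), β ∈ ssytContents (lam i0) n → castN β ∈ P := by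
    intro i0 β hβ
    apply subset_convexHull
    exact Set.mem_image_of_mem _ (Set.mem_iUnion.2 ⟨i0, hβ⟩)
  intro t
  induction t with
  | zero =>
    intro y hy
    rcases Set.eq_empty_or_nonempty P with hPe | hPne
    · rw [hPe] at hy
      simp only [Nat.cast_zero, Set.smul_set_empty] at hy
      exact absurd hy (Set.notMem_empty _)
    · rw [Nat.cast_zero, Set.zero_smul_set hPne] at hy
      have hy0 : castZ y = 0 := hy
      have hyz : y = 0 := by
        funext i
        have := congrFun hy0 i
        simpa [castZ] using this
      refine ⟨Fin.elim0, fun j => j.elim0, ?_⟩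
      rw [hyz]
      simp
  | succ s IH =>
    intro y hy
    obtain ⟨α, ⟨I, hIcard, D, hD, hαD⟩, hyα⟩ := (hsnp (s + 1) (Nat.succ_pos s) y).mp hy
    have hIne : I ≠ 0 := by
      intro h
      rw [h] at hIcard
      simp at hIcard
    obtain ⟨i0, hi0⟩ := Multiset.exists_mem_of_ne_zero hIne
    obtain ⟨I', rfl⟩ : ∃ I', I = i0 ::ₘ I' := ⟨I.erase i0, (Multiset.cons_erase hi0).symm⟩
    have hI' : Multiset.card I' = s := by
      rw [Multiset.card_cons] at hIcard
      omega
    have hD' : ∀ r, D.rowLen r =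
        (lam i0).rowLen r + (I'.map fun i => (lam i).rowLen r).sum := by
      intro r
      rw [hD r, Multiset.map_cons, Multiset.sum_cons]
    -- the diagram for I'
    set g2 : ℕ → ℕ := fun r => (I'.map fun i => (lam i).rowLen r).sum with hg2
    have hg2anti : ∀ r, g2 (r + 1) ≤ g2 r := by
      intro r
      simp only [hg2]
      refine Multiset.sum_map_le_sum_map _ _ fun i _ => ?_
      exact (lam i).rowLen_anti r (r + 1) (Nat.le_succ r)
    have hg2zero : ∀ r, n ≤ r → g2 r = 0 := by
      intro r hr
      simp only [hg2]
      rw [Multiset.sum_eq_zero]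
      intro x hx
      obtain ⟨i, -, rfl⟩ := Multiset.mem_map.1 hx
      exact hrowlam i r hr
    set D2 := SNPaux.ofFn g2 hg2anti n hg2zero with hD2
    have hD2row : ∀ r, D2.rowLen r = g2 r := SNPaux.rowLen_ofFn g2 hg2anti n hg2zero
    have hsumrow : ∀ r, D.rowLen r = (lam i0).rowLen r + D2.rowLen r := by
      intro r; rw [hD2row]; exact hD' r
    obtain ⟨β, γ, hβ, hγ, hsplit⟩ := SNPaux.main_split n D (lam i0) D2 hsumrow α hαD
    cases s with
    | zero =>
      -- t = 1 : single tableau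
      refine ⟨fun _ => y, fun j => ?_, ?_⟩
      · have hcast : castZ y = castN α := by
          funext i
          rw [hyα]
          simp [castZ, castN]
        -- show D = lam i0
        have hI'0 : I' = 0 := Multiset.card_eq_zero.1 hI'
        have hDeq : D = lam i0 := by
          have hrow : ∀ r, D.rowLen r = (lam i0).rowLen r := by
            intro r
            rw [hD' r, hI'0]
            simp
          ext c
          rw [YoungDiagram.mem_cells, YoungDiagram.mem_cells]
          cases c with
          | mk a b =>
            rw [YoungDiagram.mem_iff_lt_rowLen, YoungDiagram.mem_iff_lt_rowLen, hrow a]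
        rw [hcast]
        exact hmemP i0 α (hDeq ▸ hαD)
      · rw [Fin.sum_univ_one]
    | succ s' =>
      set yβ : Fin n → ℤ := fun i => (β i : ℤ) with hyβ
      set yγ : Fin n → ℤ := fun i => (γ i : ℤ) with hyγ
      have hγsupp : γ ∈ suppTS lam n (s' + 1) := ⟨I', hI', D2, hD2row, hγ⟩
      have hyγmem : castZ yγ ∈ ((s' + 1 : ℕ) : ℝ) • P :=
        (hsnp (s' + 1) (Nat.succ_pos s') yγ).mpr ⟨γ, hγsupp, rfl⟩
      obtain ⟨f', hf', hsum'⟩ := IH yγ hyγmem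
      refine ⟨Fin.cons yβ f', ?_, ?_⟩
      · intro j
        refine Fin.cases ?_ ?_ j
        · rw [Fin.cons_zero]
          have : castZ yβ = castN β := by funext i; simp [castZ, castN, hyβ]
          rw [this]
          exact hmemP i0 β hβ
        · intro j'
          rw [Fin.cons_succ]
          exact hf' j'
      · rw [Fin.sum_cons, ← hsum']
        funext i
        have h1 : y i = (α i : ℤ) := by rw [hyα]
        have h2 : α i = β i + γ i := hsplit i
        simp only [Pi.add_apply, hyβ, hyγ, h1, h2]
        push_cast
        ring
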